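/- arXiv:1709.09221 — 5 statements merged into one kernel-verified Lean document; each statement's English description precedes it below -/
import Mathlib

section
/- Let s > 0 be a real number and (a_k)_{k≥1} a sequence of real numbers. If the limit lim_{n→∞} n^{-s} · (a_1 + a_2 + … + a_n) exists and equals L, then the limit lim_{n→∞} (1/n) · Σ_{k=1}^n k^{1-s} a_k exists and equals s·L. -/
open Filter

/-- Abel summation identity for our setting. -/
lemma abel_ident (s : ℝ) (a : ℕ → ℝ) (n : ℕ) :
    ∑ k ∈ Finset.Icc 1 n, (k : ℝ) ^ (1 - s) * a k
      = (n : ℝ) ^ (1 - s) * (∑ k ∈ Finset.Icc 1 n, a k)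
        + ∑ k ∈ Finset.Icc 1 (n - 1),
            ((k : ℝ) ^ (1 - s) - ((k : ℝ) + 1) ^ (1 - s)) * (∑ j ∈ Finset.Icc 1 k, a j) := by
  induction n with
  | zero => simp
  | succ n ih =>
    rcases Nat.eq_zero_or_pos n with rfl | h1
    · norm_num
    · obtain ⟨m, rfl⟩ : ∃ m, n = m + 1 := ⟨n - 1, by omega⟩
      rw [Finset.sum_Icc_succ_top (by omega : 1 ≤ m + 1 + 1)
            (fun k => (k : ℝ) ^ (1 - s) * a k), ih]
      simp only [Nat.succ_sub_one, Nat.add_sub_cancel]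
      rw [Finset.sum_Icc_succ_top (by omega : 1 ≤ m + 1)
            (fun k => ((k : ℝ) ^ (1 - s) - ((k : ℝ) + 1) ^ (1 - s)) * ∑ j ∈ Finset.Icc 1 k, a j),
          Finset.sum_Icc_succ_top (by omega : 1 ≤ m + 1 + 1) a,
          Finset.sum_Icc_succ_top (by omega : 1 ≤ m + 1) a]
      push_cast
      ring

/-- The auxiliary sequence `k ↦ k^s (k^{1-s} - (k+1)^{1-s})` tends to `s - 1`. -/
lemma c_tendsto (s : ℝ) :
    Tendsto (fun k : ℕ => (k : ℝ) ^ s * ((k : ℝ) ^ (1 - s) - ((k : ℝ) + 1) ^ (1 - s)))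
      atTop (nhds (s - 1)) := by
  have hd : HasDerivAt (fun t : ℝ => t - t ^ s) (1 - s) 1 := by
    have h1 := Real.hasDerivAt_rpow_const (p := s) (x := 1) (Or.inl one_ne_zero)
    simpa using (hasDerivAt_id' (1 : ℝ)).fun_sub h1
  have hslope := hasDerivAt_iff_tendsto_slope.mp hd
  have ht : Tendsto (fun k : ℕ => (k : ℝ) / ((k : ℝ) + 1)) atTop (nhdsWithin 1 {(1 : ℝ)}ᶜ) := by
    apply tendsto_nhdsWithin_of_tendsto_nhds_of_eventually_within
    · exact tendsto_natCast_div_add_atTop (1 : ℝ)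
    · filter_upwards with k
      have hk1 : (0 : ℝ) < (k : ℝ) + 1 := by positivity
      have : (k : ℝ) / ((k : ℝ) + 1) < 1 := by
        rw [div_lt_one hk1]; linarith
      exact (ne_of_lt this)
  have hcomp := hslope.comp ht
  have hneg : Tendsto (fun k : ℕ =>
      -slope (fun t : ℝ => t - t ^ s) 1 ((k : ℝ) / ((k : ℝ) + 1))) atTop (nhds (s - 1)) := by
    have := hcomp.neg
    rw [← neg_sub s 1] at this
    simpa using this
  apply hneg.congr'
  filter_upwards [eventually_ge_atTop 1] with k hk
  have hK : (0 : ℝ) < (k : ℝ) := by exact_mod_cast hk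
  have hK1 : (0 : ℝ) < (k : ℝ) + 1 := by positivity
  have hKs : ((k : ℝ) + 1) ^ s ≠ 0 := (Real.rpow_pos_of_pos hK1 s).ne'
  have e1 : ((k : ℝ) / ((k : ℝ) + 1)) ^ s = (k : ℝ) ^ s / ((k : ℝ) + 1) ^ s :=
    Real.div_rpow hK.le hK1.le s
  have e2 : (k : ℝ) ^ s * (k : ℝ) ^ (1 - s) = (k : ℝ) := by
    rw [← Real.rpow_add hK]; simp
  have e3 : ((k : ℝ) + 1) ^ (1 - s) = ((k : ℝ) + 1) / ((k : ℝ) + 1) ^ s := by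
    rw [Real.rpow_sub hK1, Real.rpow_one]
  have hne : (k : ℝ) / ((k : ℝ) + 1) - 1 ≠ 0 := by
    have : (k : ℝ) / ((k : ℝ) + 1) < 1 := by rw [div_lt_one hK1]; linarith
    intro h0
    exact this.ne (by linarith [sub_eq_zero.mp h0])
  rw [slope_def_field]
  simp only [Real.one_rpow]
  rw [e1, mul_sub, e2, e3]
  field_simp
  ring

/-- If `lim_{n→∞} n^{-s} ∑_{k=1}^n a_k = L` for `s > 0`, then
`lim_{n→∞} (1/n) ∑_{k=1}^n k^{1-s} a_k = s·L`. -/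
theorem stmt0 (s : ℝ) (hs : 0 < s) (a : ℕ → ℝ) (L : ℝ)
    (h : Tendsto (fun n : ℕ => (n : ℝ) ^ (-s) * ∑ k ∈ Finset.Icc 1 n, a k)
      atTop (nhds L)) :
    Tendsto (fun n : ℕ => (1 / (n : ℝ)) * ∑ k ∈ Finset.Icc 1 n, (k : ℝ) ^ (1 - s) * a k)
      atTop (nhds (s * L)) := by
  set b : ℕ → ℝ := fun n => (n : ℝ) ^ (-s) * ∑ k ∈ Finset.Icc 1 n, a k with hb
  set c : ℕ → ℝ := fun k => (k : ℝ) ^ s * ((k : ℝ) ^ (1 - s) - ((k : ℝ) + 1) ^ (1 - s)) with hc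
  have hbL : Tendsto b atTop (nhds L) := h
  have hcL : Tendsto c atTop (nhds (s - 1)) := c_tendsto s
  have hbc : Tendsto (fun k => b k * c k) atTop (nhds (L * (s - 1))) := hbL.mul hcL
  set d : ℕ → ℝ := fun i => b (i + 1) * c (i + 1) with hdd
  have hdL : Tendsto d atTop (nhds (L * (s - 1))) := hbc.comp (tendsto_add_atTop_nat 1)
  have hces : Tendsto (fun m : ℕ => (m : ℝ)⁻¹ * ∑ i ∈ Finset.range m, d i)
      atTop (nhds (L * (s - 1))) := hdL.cesaro
  have hces' : Tendsto (fun n : ℕ => (((n - 1 : ℕ) : ℝ))⁻¹ * ∑ i ∈ Finset.range (n - 1), d i)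
      atTop (nhds (L * (s - 1))) := hces.comp (tendsto_sub_atTop_nat 1)
  have hratio : Tendsto (fun n : ℕ => ((n - 1 : ℕ) : ℝ) / (n : ℝ)) atTop (nhds 1) := by
    have h0 : Tendsto (fun n : ℕ => 1 - 1 / (n : ℝ)) atTop (nhds 1) := by
      have : Tendsto (fun n : ℕ => 1 / (n : ℝ)) atTop (nhds 0) := tendsto_one_div_atTop_nhds_zero_nat
      simpa using (tendsto_const_nhds (x := (1 : ℝ))).sub this
    apply h0.congr'
    filter_upwards [eventually_ge_atTop 1] with n hn
    have hn0 : (0 : ℝ) < (n : ℝ) := by exact_mod_cast hn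
    rw [Nat.cast_sub hn, Nat.cast_one]
    field_simp
  set g : ℕ → ℝ := fun n => (1 / (n : ℝ)) * ∑ k ∈ Finset.Icc 1 (n - 1), b k * c k with hg
  have hgL : Tendsto g atTop (nhds (L * (s - 1))) := by
    have hprod := hratio.mul hces'
    rw [one_mul] at hprod
    apply hprod.congr'
    filter_upwards [eventually_ge_atTop 2] with n hn
    have hn1 : (1 : ℕ) ≤ n - 1 := by omega
    have hm0 : ((n - 1 : ℕ) : ℝ) ≠ 0 := by
      have : (0 : ℝ) < ((n - 1 : ℕ) : ℝ) := by exact_mod_cast hn1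
      exact this.ne'
    have hnn : ((n : ℝ)) ≠ 0 := by positivity
    have hIcc : ∑ k ∈ Finset.Icc 1 (n - 1), b k * c k = ∑ i ∈ Finset.range (n - 1), d i := by
      rw [← Finset.Ico_add_one_right_eq_Icc, Finset.sum_Ico_eq_sum_range]
      simp only [Nat.add_sub_cancel]
      apply Finset.sum_congr rfl
      intro i _
      show b (1 + i) * c (1 + i) = d i
      simp only [hdd, Nat.add_comm]
    simp only [hg]
    rw [hIcc]
    have heq : ((n - 1 : ℕ) : ℝ) / (n : ℝ) * ((((n - 1 : ℕ) : ℝ))⁻¹ * ∑ i ∈ Finset.range (n - 1), d i)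
        = (((n - 1 : ℕ) : ℝ) * (((n - 1 : ℕ) : ℝ))⁻¹) * ((1 / (n : ℝ)) * ∑ i ∈ Finset.range (n - 1), d i) := by
      ring
    rw [heq, mul_inv_cancel₀ hm0, one_mul]
  have hsum : Tendsto (fun n => b n + g n) atTop (nhds (L + L * (s - 1))) := hbL.add hgL
  have hfin : L + L * (s - 1) = s * L := by ring
  rw [hfin] at hsum
  apply hsum.congr'
  filter_upwards [eventually_ge_atTop 1] with n hn
  have hn0 : (0 : ℝ) < (n : ℝ) := by exact_mod_cast hn
  rw [abel_ident s a n, mul_add]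
  have key2 : (1 / (n : ℝ)) * ((n : ℝ) ^ (1 - s) * ∑ k ∈ Finset.Icc 1 n, a k) = b n := by
    have e : (n : ℝ) ^ (1 - s) = (n : ℝ) * (n : ℝ) ^ (-s) := by
      rw [sub_eq_add_neg, Real.rpow_add hn0, Real.rpow_one]
    simp only [hb]
    rw [e]
    field_simp
  have key : (1 / (n : ℝ)) * ∑ k ∈ Finset.Icc 1 (n - 1),
      ((k : ℝ) ^ (1 - s) - ((k : ℝ) + 1) ^ (1 - s)) * (∑ j ∈ Finset.Icc 1 k, a j) = g n := by
    simp only [hg]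
    congr 1
    apply Finset.sum_congr rfl
    intro k hk
    have hk1 : 1 ≤ k := (Finset.mem_Icc.mp hk).1
    have hK : (0 : ℝ) < (k : ℝ) := by exact_mod_cast hk1
    simp only [hb, hc]
    rw [mul_mul_mul_comm, ← Real.rpow_add hK]
    simp [mul_comm]
  rw [key2, key]
end

section
/- Let s > 0 be a real number and (a_k)_{k≥1} a sequence of real numbers. If the limit lim_{n→∞} (1/n) · Σ_{k=1}^n k^{1-s} a_k exists and equals M, then the limit lim_{n→∞} n^{-s} · (a_1 + a_2 + … + a_n) exists and equals M/s. -/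
open Filter Finset Asymptotics


lemma aux_abel (w u : ℕ → ℝ) (n : ℕ) :
    ∑ k ∈ Finset.Icc 1 n, w k * u k =
      w n * (∑ k ∈ Finset.Icc 1 n, u k)
        - ∑ k ∈ Finset.Ico 1 n, (w (k+1) - w k) * (∑ j ∈ Finset.Icc 1 k, u j) := by
  induction n with
  | zero => simp
  | succ n ih =>
    rcases Nat.eq_zero_or_pos n with rfl | hn
    · simp
    · rw [Finset.sum_Icc_succ_top (by omega), Finset.sum_Icc_succ_top (by omega : 1 ≤ n+1) u,
        Finset.sum_Ico_succ_top (by omega), ih]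
      ring

lemma aux_mass (w : ℕ → ℝ) (n : ℕ) :
    ∑ k ∈ Finset.Ico 1 n, (w (k+1) - w k) * (k : ℝ) =
      (n : ℝ) * w n - ∑ k ∈ Finset.Icc 1 n, w k := by
  induction n with
  | zero => simp
  | succ n ih =>
    rcases Nat.eq_zero_or_pos n with rfl | hn
    · simp
    · rw [Finset.sum_Ico_succ_top (by omega), Finset.sum_Icc_succ_top (by omega : 1 ≤ n+1), ih]
      push_cast
      ring



lemma aux_weighted {p c : ℕ → ℝ} {M : ℝ} (hp : ∀ k, 0 ≤ p k)
    (hP : Tendsto (fun n => ∑ i ∈ Finset.range n, p i) atTop atTop)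
    (hc : Tendsto c atTop (nhds M)) :
    Tendsto (fun n => (∑ i ∈ Finset.range n, p i * c i) / ∑ i ∈ Finset.range n, p i)
      atTop (nhds M) := by
  have hf : (fun i => p i * c i - M * p i) =o[atTop] p := by
    rw [Asymptotics.isLittleO_iff]
    intro ε hε
    have h0 : Tendsto (fun i => c i - M) atTop (nhds 0) := by
      simpa using hc.sub_const M
    filter_upwards [h0.eventually (Metric.ball_mem_nhds 0 hε)] with i hi
    have : |c i - M| < ε := by simpa [Real.dist_eq] using hi
    have : ‖p i * c i - M * p i‖ = p i * |c i - M| := by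
      rw [Real.norm_eq_abs]
      rw [show p i * c i - M * p i = p i * (c i - M) by ring, abs_mul, abs_of_nonneg (hp i)]
    rw [this, Real.norm_eq_abs, abs_of_nonneg (hp i)]
    calc p i * |c i - M| ≤ p i * ε := by
          exact mul_le_mul_of_nonneg_left (le_of_lt ‹|c i - M| < ε›) (hp i)
      _ = ε * p i := by ring
  have hsum := (hf.sum_range hp hP).tendsto_div_nhds_zero
  have hev : ∀ᶠ n in atTop, (∑ i ∈ Finset.range n, (p i * c i - M * p i)) /
      (∑ i ∈ Finset.range n, p i) + M
      = (∑ i ∈ Finset.range n, p i * c i) / ∑ i ∈ Finset.range n, p i := by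
    filter_upwards [hP.eventually_ge_atTop 1] with n hn
    have hne : (∑ i ∈ Finset.range n, p i) ≠ 0 := by positivity
    rw [Finset.sum_sub_distrib, ← Finset.mul_sum, sub_div, mul_div_assoc,
      div_self hne]
    ring
  have := (hsum.add_const M)
  rw [zero_add] at this
  exact Tendsto.congr' hev this


lemma aux_reindex (f : ℕ → ℝ) (n : ℕ) :
    ∑ i ∈ Finset.Ico 0 n, f (i+1) = ∑ k ∈ Finset.Icc 1 n, f k := by
  induction n with
  | zero => simp
  | succ n ih =>
    rw [Finset.sum_Ico_succ_top (Nat.zero_le _), Finset.sum_Icc_succ_top (by omega : 1 ≤ n+1), ih]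

lemma aux_split (f : ℕ → ℝ) (n : ℕ) (hn : 1 ≤ n) :
    ∑ k ∈ Finset.Icc 1 n, f k = f 1 + ∑ i ∈ Finset.Ico 1 n, f (i+1) := by
  induction n with
  | zero => omega
  | succ n ih =>
    rcases Nat.eq_zero_or_pos n with rfl | hn'
    · simp
    · rw [Finset.sum_Icc_succ_top (by omega : 1 ≤ n+1), Finset.sum_Ico_succ_top (by omega), ih hn']
      ring

lemma aux_ns (s : ℝ) (hs : 0 < s) :
    Tendsto (fun n : ℕ => (n:ℝ)^(-s)) atTop (nhds 0) :=
  (tendsto_rpow_neg_atTop hs).comp tendsto_natCast_atTop_atTop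

lemma aux_ratio (s : ℝ) (hs : 0 < s) :
    Tendsto (fun n : ℕ => (n:ℝ)^(-s) * ((n:ℝ)+1)^s) atTop (nhds 1) := by
  have hq : Tendsto (fun n : ℕ => ((n:ℝ)+1)/n) atTop (nhds 1) := by
    have h1 : Tendsto (fun n : ℕ => 1 + 1/(n:ℝ)) atTop (nhds 1) := by
      simpa using tendsto_const_nhds.add (tendsto_one_div_atTop_nhds_zero_nat : Tendsto (fun n : ℕ => 1/(n:ℝ)) atTop (nhds 0))
    apply h1.congr'
    filter_upwards [eventually_ge_atTop 1] with n hn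
    have : (n:ℝ) ≠ 0 := by positivity
    field_simp
  have hpow : Tendsto (fun n : ℕ => (((n:ℝ)+1)/n) ^ s) atTop (nhds 1) := by
    have hcont := (Real.continuousAt_rpow_const 1 s (Or.inr hs.le)).tendsto
    have := hcont.comp hq
    simpa [Real.one_rpow, Function.comp_def] using this
  apply hpow.congr'
  filter_upwards [eventually_ge_atTop 1] with n hn
  have hn0 : (0:ℝ) < (n:ℝ) := by positivity
  rw [Real.div_rpow (by positivity) (le_of_lt hn0), Real.rpow_neg (le_of_lt hn0)]
  ring

lemma aux_sumC (s : ℝ) (hs : 0 < s) :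
    Tendsto (fun n : ℕ => (n:ℝ)^(-s) * ∑ k ∈ Finset.Icc 1 n, (k:ℝ)^(s-1))
      atTop (nhds (1/s)) := by
  have hint : ∀ a b : ℝ, (∫ x in a..b, x^(s-1)) = (b^s - a^s)/s := by
    intro a b
    rw [integral_rpow (Or.inl (by linarith))]
    rw [show s - 1 + 1 = s by ring]
  rcases le_or_gt 1 s with hs1 | hs1
  · -- monotone case
    have hmono : ∀ b : ℕ, MonotoneOn (fun x : ℝ => x^(s-1)) (Set.Icc (0:ℝ) (b:ℕ)) := by
      intro b x hx y hy hxy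
      exact Real.rpow_le_rpow hx.1 hxy (by linarith)
    have hlow : ∀ n : ℕ, (n:ℝ)^s/s ≤ ∑ k ∈ Finset.Icc 1 n, (k:ℝ)^(s-1) := by
      intro n
      have h := MonotoneOn.integral_le_sum_Ico (a := 0) (b := n) (Nat.zero_le n) (by
        simpa using hmono n)
      rw [hint] at h
      have e : ∑ i ∈ Finset.Ico 0 n, ((i+1:ℕ):ℝ)^(s-1) = ∑ k ∈ Finset.Icc 1 n, (k:ℝ)^(s-1) :=
        aux_reindex (fun k => (k:ℝ)^(s-1)) n
      rw [e] at h
      simpa [Real.zero_rpow hs.ne'] using h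
    have hup : ∀ n : ℕ, ∑ k ∈ Finset.Icc 1 n, (k:ℝ)^(s-1) ≤ ((n:ℝ)+1)^s/s := by
      intro n
      have h := MonotoneOn.sum_le_integral_Ico (a := 0) (b := n+1) (Nat.zero_le _) (by
        simpa using hmono (n+1))
      rw [hint] at h
      have e : ∑ x ∈ Finset.Ico 0 (n+1), ((x:ℕ):ℝ)^(s-1)
          = (0:ℝ)^(s-1) + ∑ k ∈ Finset.Icc 1 n, (k:ℝ)^(s-1) := by
        rw [Finset.sum_eq_sum_Ico_succ_bot (by omega), ← Finset.Ico_add_one_right_eq_Icc]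
        norm_num
      rw [e] at h
      have h0 : (0:ℝ) ≤ (0:ℝ)^(s-1) := Real.rpow_nonneg le_rfl _
      push_cast at h
      rw [Real.zero_rpow hs.ne', sub_zero] at h
      linarith
    apply tendsto_of_tendsto_of_tendsto_of_le_of_le' (g := fun _ => 1/s)
        (h := fun n : ℕ => ((n:ℝ)^(-s) * ((n:ℝ)+1)^s)/s)
    · exact tendsto_const_nhds
    · have := (aux_ratio s hs).div_const s
      simpa using this
    · filter_upwards [eventually_ge_atTop 1] with n hn
      have hn0 : (0:ℝ) < (n:ℝ) := by exact_mod_cast Nat.pos_of_ne_zero (by omega)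
      have hpos : (0:ℝ) < (n:ℝ)^s := Real.rpow_pos_of_pos hn0 s
      have := mul_le_mul_of_nonneg_left (hlow n) (Real.rpow_nonneg hn0.le (-s))
      calc 1/s = (n:ℝ)^(-s) * ((n:ℝ)^s/s) := by
            rw [Real.rpow_neg hn0.le]
            field_simp
        _ ≤ _ := this
    · filter_upwards with n
      have := mul_le_mul_of_nonneg_left (hup n) (Real.rpow_nonneg (Nat.cast_nonneg n) (-s))
      calc (n:ℝ)^(-s) * ∑ k ∈ Finset.Icc 1 n, (k:ℝ)^(s-1) ≤ (n:ℝ)^(-s) * (((n:ℝ)+1)^s/s) := this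
        _ = ((n:ℝ)^(-s) * ((n:ℝ)+1)^s)/s := by ring
  · -- antitone case
    have hanti : ∀ b : ℕ, AntitoneOn (fun x : ℝ => x^(s-1)) (Set.Icc ((1:ℕ):ℝ) ((b:ℕ):ℝ)) := by
      intro b x hx y hy hxy
      have : (0:ℝ) < x := lt_of_lt_of_le zero_lt_one (by exact_mod_cast hx.1)
      exact Real.rpow_le_rpow_of_nonpos this hxy (by linarith)
    have hlow : ∀ n : ℕ, (((n:ℝ)+1)^s - 1)/s ≤ ∑ k ∈ Finset.Icc 1 n, (k:ℝ)^(s-1) := by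
      intro n
      have h := AntitoneOn.integral_le_sum_Ico (a := 1) (b := n+1) (by omega) (hanti (n+1))
      rw [hint] at h
      rw [← Finset.Ico_add_one_right_eq_Icc]
      push_cast at h ⊢
      simpa [Real.one_rpow] using h
    have hup : ∀ n : ℕ, 1 ≤ n → ∑ k ∈ Finset.Icc 1 n, (k:ℝ)^(s-1) ≤ 1 + ((n:ℝ)^s - 1)/s := by
      intro n hn
      have h := AntitoneOn.sum_le_integral_Ico (a := 1) (b := n) hn (hanti n)
      rw [hint] at h
      rw [aux_split (fun k => (k:ℝ)^(s-1)) n hn]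
      simp only [Real.one_rpow, Nat.cast_one]
      have e2 : ∑ i ∈ Finset.Ico 1 n, ((i+1:ℕ):ℝ)^(s-1)
          = ∑ i ∈ Finset.Ico 1 n, ((i:ℝ)+1)^(s-1) := by
        apply Finset.sum_congr rfl
        intro i _
        push_cast
        ring_nf
      push_cast at h
      rw [Real.one_rpow] at h
      linarith [e2 ▸ h]
    apply tendsto_of_tendsto_of_tendsto_of_le_of_le'
        (g := fun n : ℕ => ((n:ℝ)^(-s) * ((n:ℝ)+1)^s - (n:ℝ)^(-s))/s)
        (h := fun n : ℕ => (n:ℝ)^(-s) + (1 - (n:ℝ)^(-s))/s)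
    · have := ((aux_ratio s hs).sub (aux_ns s hs)).div_const s
      simpa using this
    · have h1 := (aux_ns s hs).add (((tendsto_const_nhds (x := (1:ℝ)) (f := atTop (α := ℕ))).sub (aux_ns s hs)).div_const s)
      simpa using h1
    · filter_upwards with n
      have := mul_le_mul_of_nonneg_left (hlow n) (Real.rpow_nonneg (Nat.cast_nonneg n) (-s))
      calc ((n:ℝ)^(-s) * ((n:ℝ)+1)^s - (n:ℝ)^(-s))/s
            = (n:ℝ)^(-s) * ((((n:ℝ)+1)^s - 1)/s) := by ring
        _ ≤ _ := this
    · filter_upwards [eventually_ge_atTop 1] with n hn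
      have hn0 : (0:ℝ) < (n:ℝ) := by exact_mod_cast Nat.pos_of_ne_zero (by omega)
      have hInv : (n:ℝ)^(-s) * (n:ℝ)^s = 1 := by
        rw [Real.rpow_neg hn0.le]
        field_simp [(Real.rpow_pos_of_pos hn0 s).ne']
      have := mul_le_mul_of_nonneg_left (hup n hn) (Real.rpow_nonneg hn0.le (-s))
      calc (n:ℝ)^(-s) * ∑ k ∈ Finset.Icc 1 n, (k:ℝ)^(s-1)
            ≤ (n:ℝ)^(-s) * (1 + ((n:ℝ)^s - 1)/s) := this
        _ = (n:ℝ)^(-s) + ((n:ℝ)^(-s) * (n:ℝ)^s - (n:ℝ)^(-s))/s := by ring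
        _ = (n:ℝ)^(-s) + (1 - (n:ℝ)^(-s))/s := by rw [hInv]


/-- If `lim_{n→∞} (1/n) ∑_{k=1}^n k^{1-s} a_k = M` for `s > 0`, then
`lim_{n→∞} n^{-s} ∑_{k=1}^n a_k = M/s`. -/
theorem stmt1 (s : ℝ) (hs : 0 < s) (a : ℕ → ℝ) (M : ℝ)
    (h : Tendsto (fun n : ℕ => (1 / (n : ℝ)) * ∑ k ∈ Finset.Icc 1 n, (k : ℝ) ^ (1 - s) * a k)
      atTop (nhds M)) :
    Tendsto (fun n : ℕ => (n : ℝ) ^ (-s) * ∑ k ∈ Finset.Icc 1 n, a k)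
      atTop (nhds (M / s)) := by
  by_cases hs1 : s = 1
  · subst hs1
    simp only [sub_self, Real.rpow_zero, one_mul, div_one] at h ⊢
    apply h.congr
    intro n
    rw [Real.rpow_neg_one, one_div]
  · set w : ℕ → ℝ := fun k => (k:ℝ)^(s-1) with hw
    set u : ℕ → ℝ := fun k => (k:ℝ)^(1-s) * a k with hu
    set σ : ℕ → ℝ := fun n => ∑ k ∈ Finset.Icc 1 n, u k with hσdef
    have hσ : Tendsto (fun n : ℕ => σ n / n) atTop (nhds M) := by
      apply h.congr
      intro n
      rw [one_div, inv_mul_eq_div]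
    -- choose the sign
    obtain ⟨ς, hς2, hςd, hL⟩ : ∃ ς : ℝ, ς * ς = 1 ∧
        (∀ k : ℕ, 1 ≤ k → 0 ≤ ς * (w (k+1) - w k)) ∧ 0 < ς * (1 - 1/s) := by
      rcases lt_or_gt_of_ne hs1 with hlt | hgt
      · refine ⟨-1, by norm_num, fun k hk => ?_, ?_⟩
        · have hk0 : (0:ℝ) < (k:ℝ) := by exact_mod_cast hk
          have : w (k+1) ≤ w k := by
            apply Real.rpow_le_rpow_of_nonpos hk0 (by push_cast; linarith) (by linarith)
          nlinarith
        · have : 1 < 1/s := by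
            rw [show (1:ℝ)/s = 1/s from rfl]
            exact (one_lt_div hs).mpr hlt
          nlinarith
      · refine ⟨1, by norm_num, fun k hk => ?_, ?_⟩
        · have : w k ≤ w (k+1) := by
            apply Real.rpow_le_rpow (Nat.cast_nonneg k) (by push_cast; linarith) (by linarith)
          nlinarith
        · have : 1/s < 1 := (div_lt_one hs).mpr hgt
          nlinarith
    set p : ℕ → ℝ := fun k => ς * ((w (k+1) - w k) * k) with hpdef
    have hp : ∀ k, 0 ≤ p k := by
      intro k
      rcases Nat.eq_zero_or_pos k with rfl | hk
      · simp [hpdef]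
      · have : p k = (ς * (w (k+1) - w k)) * k := by rw [hpdef]; ring
        rw [this]
        exact mul_nonneg (hςd k hk) (Nat.cast_nonneg k)
    have hmass : ∀ n : ℕ, ∑ i ∈ Finset.range n, p i
        = ς * ((n:ℝ) * w n - ∑ k ∈ Finset.Icc 1 n, w k) := by
      intro n
      rcases Nat.eq_zero_or_pos n with rfl | hn
      · simp
      · rw [Finset.range_eq_Ico, Finset.sum_eq_sum_Ico_succ_bot hn]
        have h0 : p 0 = 0 := by simp [hpdef]
        rw [h0, zero_add, ← aux_mass w n, Finset.mul_sum]
    have hInv : ∀ n : ℕ, 1 ≤ n → (n:ℝ)^(-s) * (n:ℝ)^s = 1 := by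
      intro n hn
      have hn0 : (0:ℝ) < (n:ℝ) := by exact_mod_cast hn
      rw [← Real.rpow_add hn0]
      norm_num
    have hnws : ∀ n : ℕ, 1 ≤ n → (n:ℝ) * w n = (n:ℝ)^s := by
      intro n hn
      have hn0 : (0:ℝ) < (n:ℝ) := by exact_mod_cast hn
      rw [hw]
      show (n:ℝ) * (n:ℝ)^(s-1) = (n:ℝ)^s
      rw [show (n:ℝ) * (n:ℝ)^(s-1) = (n:ℝ)^(1:ℝ) * (n:ℝ)^(s-1) by rw [Real.rpow_one],
        ← Real.rpow_add hn0]
      norm_num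
    have hQ : Tendsto (fun n : ℕ => (n:ℝ)^(-s) * ∑ i ∈ Finset.range n, p i)
        atTop (nhds (ς * (1 - 1/s))) := by
      have hbase : Tendsto (fun n : ℕ => ς * (1 - (n:ℝ)^(-s) * ∑ k ∈ Finset.Icc 1 n, w k))
          atTop (nhds (ς * (1 - 1/s))) :=
        tendsto_const_nhds.mul (tendsto_const_nhds.sub (aux_sumC s hs))
      apply hbase.congr'
      filter_upwards [eventually_ge_atTop 1] with n hn
      rw [hmass n]
      have h1 : (n:ℝ)^(-s) * ((n:ℝ) * w n) = 1 := by
        rw [hnws n hn]; exact hInv n hn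
      calc ς * (1 - (n:ℝ)^(-s) * ∑ k ∈ Finset.Icc 1 n, w k)
          = ς * ((n:ℝ)^(-s) * ((n:ℝ) * w n) - (n:ℝ)^(-s) * ∑ k ∈ Finset.Icc 1 n, w k) := by
            rw [h1]
        _ = (n:ℝ)^(-s) * (ς * ((n:ℝ) * w n - ∑ k ∈ Finset.Icc 1 n, w k)) := by ring
    have hPtop : Tendsto (fun n : ℕ => ∑ i ∈ Finset.range n, p i) atTop atTop := by
      have hns : Tendsto (fun n : ℕ => (n:ℝ)^s) atTop atTop :=
        (tendsto_rpow_atTop hs).comp tendsto_natCast_atTop_atTop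
      have := Filter.Tendsto.pos_mul_atTop hL hQ hns
      apply this.congr'
      filter_upwards [eventually_ge_atTop 1] with n hn
      have := hInv n hn
      calc (n:ℝ)^(-s) * (∑ i ∈ Finset.range n, p i) * (n:ℝ)^s
          = (∑ i ∈ Finset.range n, p i) * ((n:ℝ)^(-s) * (n:ℝ)^s) := by ring
        _ = ∑ i ∈ Finset.range n, p i := by rw [this, mul_one]
    set c : ℕ → ℝ := fun k => σ k / k with hcdef
    have hW := aux_weighted hp hPtop hσ
    have hprod := hW.mul hQ
    -- final assembly
    have hfinal : Tendsto (fun n : ℕ => σ n / n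
        - ς * ((∑ i ∈ Finset.range n, p i * (σ i / i)) / (∑ i ∈ Finset.range n, p i)
            * ((n:ℝ)^(-s) * ∑ i ∈ Finset.range n, p i)))
        atTop (nhds (M / s)) := by
      have := hσ.sub ((hprod.const_mul ς))
      have hval : M - ς * (M * (ς * (1 - 1/s))) = M / s := by
        rw [show ς * (M * (ς * (1 - 1/s))) = (ς * ς) * (M * (1 - 1/s)) by ring, hς2, one_mul]
        field_simp
        ring
      rw [hval] at this
      exact this
    apply hfinal.congr'
    filter_upwards [eventually_ge_atTop 1, hPtop.eventually_ge_atTop 1] with n hn hPn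
    have hPne : (∑ i ∈ Finset.range n, p i) ≠ 0 := by linarith
    have hn0 : (0:ℝ) < (n:ℝ) := by exact_mod_cast hn
    -- abel identity applied to a
    have hA : ∑ k ∈ Finset.Icc 1 n, a k
        = w n * σ n - ∑ k ∈ Finset.Ico 1 n, (w (k+1) - w k) * σ k := by
      rw [← aux_abel w u n]
      apply Finset.sum_congr rfl
      intro k hk
      have hk1 : 1 ≤ k := (Finset.mem_Icc.mp hk).1
      have hk0 : (0:ℝ) < (k:ℝ) := by exact_mod_cast hk1
      rw [hw, hu]
      show a k = (k:ℝ)^(s-1) * ((k:ℝ)^(1-s) * a k)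
      rw [← mul_assoc, ← Real.rpow_add hk0]
      norm_num
    -- the weighted sum identity
    have hpc : ∑ k ∈ Finset.Ico 1 n, (w (k+1) - w k) * σ k
        = ς * ∑ i ∈ Finset.range n, p i * (σ i / i) := by
      rw [Finset.range_eq_Ico, Finset.sum_eq_sum_Ico_succ_bot (by omega : 0 < n)]
      have h0 : p 0 * (σ 0 / (0:ℕ)) = 0 := by simp [hpdef]
      rw [h0, zero_add, Finset.mul_sum]
      apply Finset.sum_congr rfl
      intro k hk
      have hk1 : 1 ≤ k := (Finset.mem_Ico.mp hk).1
      have hk0 : (k:ℝ) ≠ 0 := by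
        have : (0:ℝ) < (k:ℝ) := by exact_mod_cast hk1
        linarith
      rw [hpdef]
      show (w (k+1) - w k) * σ k = ς * (ς * ((w (k+1) - w k) * k) * (σ k / k))
      have e : (k:ℝ) * (σ k / k) = σ k := by field_simp
      calc (w (k+1) - w k) * σ k
          = (ς * ς) * ((w (k+1) - w k) * ((k:ℝ) * (σ k / k))) := by rw [hς2, e, one_mul]
        _ = ς * (ς * ((w (k+1) - w k) * k) * (σ k / k)) := by ring
    -- put together
    have goal : (n:ℝ)^(-s) * ∑ k ∈ Finset.Icc 1 n, a k
        = σ n / n - ς * ((∑ i ∈ Finset.range n, p i * (σ i / i)) / (∑ i ∈ Finset.range n, p i)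
            * ((n:ℝ)^(-s) * ∑ i ∈ Finset.range n, p i)) := by
      rw [hA, hpc]
      have hterm1 : (n:ℝ)^(-s) * (w n * σ n) = σ n / n := by
        rw [hw]
        show (n:ℝ)^(-s) * ((n:ℝ)^(s-1) * σ n) = σ n / n
        rw [← mul_assoc, ← Real.rpow_add hn0, show -s + (s-1) = -1 by ring, Real.rpow_neg_one]
        field_simp
      rw [mul_sub, hterm1]
      congr 1
      field_simp
    exact goal.symm
end

section
/- Let d, N be positive natural numbers, let H = L²([0,1], ℝ^d) be the Hilbert space of square-integrable ℝ^d-valued functions on [0,1] with Lebesgue measure, and for μ ∈ {1,…,d} let ι_μ : L²([0,1],ℝ) → H send u to t ↦ u(t)·p_μ, where p_μ is the μ-th standard basis vector of ℝ^d. Let (e_k)_{k≥1} be a weakly uniformly dense orthonormal basis of L²([0,1],ℝ). Let f : H → M_N(ℂ) be twice Fréchet differentiable at x ∈ H, and suppose that for each μ ∈ {1,…,d} there exist K^V_μ ∈ L²([0,1]×[0,1], M_N(ℂ)) and K^L_μ ∈ L^∞([0,1], M_N(ℂ)) such that for all u, v ∈ L²([0,1],ℝ): f''(x)(ι_μ u,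 ι_μ v) = ∫₀¹∫₀¹ K^V_μ(s,t) u(t) v(s) dt ds + ∫₀¹ K^L_μ(t) u(t) v(t) dt. Then lim_{n→∞} (1/n) Σ_{k=1}^n Σ_{μ=1}^d f''(x)(ι_μ e_k, ι_μ e_k) = Σ_{μ=1}^d ∫₀¹ K^L_μ(t) dt (convergence in M_N(ℂ)). -/
open Filter MeasureTheory
attribute [local instance] Matrix.frobeniusNormedAddCommGroup Matrix.frobeniusNormedSpace
section
noncomputable def matrixCENorm {N : ℕ} : ContinuousENorm (Matrix (Fin N) (Fin N) ℂ) :=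
  SeminormedAddGroup.toContinuousENorm
attribute [local instance] matrixCENorm

noncomputable abbrev m01 : Measure ℝ := MeasureTheory.volume.restrict (Set.Icc (0:ℝ) 1)

lemma memℒp_prod_fun (u v : Lp ℝ 2 m01) :
    MemLp (fun z : ℝ × ℝ => u z.2 * v z.1) 2 (m01.prod m01) := by
  have hm : AEStronglyMeasurable (fun z : ℝ × ℝ => u z.2 * v z.1) (m01.prod m01) :=
    ((Lp.aestronglyMeasurable u).comp_snd).mul ((Lp.aestronglyMeasurable v).comp_fst)
  rw [memLp_two_iff_integrable_sq hm]
  have : (fun z : ℝ × ℝ => (u z.2 * v z.1) ^ 2) =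
      fun z : ℝ × ℝ => (fun s => v s ^ 2) z.1 * (fun t => u t ^ 2) z.2 := by
    funext z; ring
  rw [this]
  exact (MemLp.integrable_sq (Lp.memLp v)).mul_prod (MemLp.integrable_sq (Lp.memLp u))

lemma inner_e (u v : Lp ℝ 2 m01) : ∫ t, u t * v t ∂m01 = @inner ℝ _ _ u v := by
  rw [MeasureTheory.L2.inner_def]
  simp [RCLike.inner_apply', mul_comm]

lemma integrable_mul_e (u v : Lp ℝ 2 m01) : Integrable (fun s => u s * v s) m01 := by
  have := MeasureTheory.L2.integrable_inner (𝕜 := ℝ) u v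
  simpa [RCLike.inner_apply', mul_comm] using this

lemma integral_coe_complex {α : Type*} [MeasurableSpace α] {μ : Measure α} {f : α → ℝ}
    (hf : Integrable f μ) : ∫ x, ((f x : ℝ) : ℂ) ∂μ = ((∫ x, f x ∂μ : ℝ) : ℂ) := by
  have h := ContinuousLinearMap.integral_comp_comm Complex.ofRealCLM hf
  simpa using h

lemma volterra_aux (e : ℕ → Lp ℝ 2 m01) (he : Orthonormal ℝ e)
    (g : ℝ × ℝ → ℂ) (hg : MemLp g 2 (m01.prod m01)) :
    Tendsto (fun n : ℕ => (1 / (n:ℝ)) • ∑ k ∈ Finset.range n,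
      ∫ z, (e k z.2 * e k z.1) • g z ∂(m01.prod m01)) atTop (nhds 0) := by
  have memΦ : ∀ k, MemLp (fun z : ℝ × ℝ => ((e k z.2 * e k z.1 : ℝ) : ℂ)) 2 (m01.prod m01) :=
    fun k => (memℒp_prod_fun (e k) (e k)).ofReal
  set Φ : ℕ → Lp ℂ 2 (m01.prod m01) := fun k => (memΦ k).toLp _ with hΦ
  set G : Lp ℂ 2 (m01.prod m01) := hg.toLp g with hG
  -- each integral is an inner product
  have h1 : ∀ k, ∫ z, (e k z.2 * e k z.1) • g z ∂(m01.prod m01) = @inner ℂ _ _ (Φ k) G := by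
    intro k
    rw [MeasureTheory.L2.inner_def]
    refine integral_congr_ae ?_
    filter_upwards [(memΦ k).coeFn_toLp, hg.coeFn_toLp] with z h1 h2
    rw [RCLike.inner_apply', h1, h2, Complex.conj_ofReal, Complex.real_smul]
  -- inner products between the Φ's
  have h2 : ∀ k l, @inner ℂ _ _ (Φ k) (Φ l) =
      ((@inner ℝ _ _ (e k) (e l) * @inner ℝ _ _ (e k) (e l) : ℝ) : ℂ) := by
    intro k l
    rw [MeasureTheory.L2.inner_def]
    have : ∀ᵐ z ∂(m01.prod m01), @inner ℂ _ _ (Φ k z) (Φ l z) =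
        (((fun s => e k s * e l s) z.1 * (fun t => e k t * e l t) z.2 : ℝ) : ℂ) := by
      filter_upwards [(memΦ k).coeFn_toLp, (memΦ l).coeFn_toLp] with z hk hl
      rw [RCLike.inner_apply', hk, hl, Complex.conj_ofReal]
      push_cast
      ring
    have hint : Integrable (fun z : ℝ × ℝ =>
        (fun s => e k s * e l s) z.1 * (fun t => e k t * e l t) z.2) (m01.prod m01) :=
      (integrable_mul_e (e k) (e l)).mul_prod (integrable_mul_e (e k) (e l))
    have key := MeasureTheory.integral_prod_mul (μ := m01) (ν := m01)
      (fun s => e k s * e l s) (fun t => e k t * e l t)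
    rw [integral_congr_ae this, integral_coe_complex hint, key, inner_e]
  have hortho : Orthonormal ℂ Φ := by
    rw [orthonormal_iff_ite]
    intro k l
    rw [h2 k l]
    rcases eq_or_ne k l with h | h
    · subst h
      simp [orthonormal_iff_ite.mp he k k, he.1 k]
    · simp [h, orthonormal_iff_ite.mp he k l]
  -- norm of partial sums
  have hnorm : ∀ n : ℕ, ‖∑ k ∈ Finset.range n, Φ k‖ = Real.sqrt n := by
    intro n
    have h3 : @inner ℂ _ _ (∑ k ∈ Finset.range n, Φ k) (∑ k ∈ Finset.range n, Φ k)
        = (n : ℂ) := by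
      have := hortho.inner_sum (fun _ => (1:ℂ)) (fun _ => (1:ℂ)) (Finset.range n)
      simpa using this
    rw [inner_self_eq_norm_sq_to_K] at h3
    have h5 : ‖∑ k ∈ Finset.range n, Φ k‖ ^ 2 = (n : ℝ) := by
      have h4 : ((‖∑ k ∈ Finset.range n, Φ k‖ ^ 2 : ℝ) : ℂ) = ((n : ℝ) : ℂ) := by
        push_cast
        exact h3
      exact_mod_cast h4
    rw [← h5, Real.sqrt_sq (norm_nonneg _)]
  -- the bound
  have hbound : ∀ n : ℕ, ‖(1 / (n:ℝ)) • ∑ k ∈ Finset.range n,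
      ∫ z, (e k z.2 * e k z.1) • g z ∂(m01.prod m01)‖ ≤ (1 / (n:ℝ)) * Real.sqrt n * ‖G‖ := by
    intro n
    rw [norm_smul]
    simp only [h1]
    rw [← sum_inner]
    have := norm_inner_le_norm (𝕜 := ℂ) (∑ k ∈ Finset.range n, Φ k) G
    rw [hnorm n] at this
    calc ‖(1/(n:ℝ))‖ * ‖@inner ℂ _ _ (∑ k ∈ Finset.range n, Φ k) G‖
        ≤ (1/(n:ℝ)) * (Real.sqrt n * ‖G‖) := by
          apply mul_le_mul _ this (norm_nonneg _) (by positivity)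
          simp [abs_of_nonneg]
      _ = (1/(n:ℝ)) * Real.sqrt n * ‖G‖ := by ring
  refine squeeze_zero_norm hbound ?_
  have h6 : Tendsto (fun n : ℕ => (1 / (n:ℝ)) * Real.sqrt n) atTop (nhds 0) := by
    have heq : (fun n : ℕ => ((n:ℝ)) ^ (-(1/2) : ℝ)) =ᶠ[atTop]
        fun n : ℕ => (1 / (n:ℝ)) * Real.sqrt n := by
      filter_upwards [eventually_gt_atTop 0] with n hn
      have hn' : (0:ℝ) < n := by exact_mod_cast hn
      rw [Real.sqrt_eq_rpow, one_div ((n:ℝ)), ← Real.rpow_neg_one ((n:ℝ)),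
        ← Real.rpow_add hn']
      norm_num
    refine Tendsto.congr' heq ?_
    exact (tendsto_rpow_neg_atTop (by norm_num)).comp tendsto_natCast_atTop_atTop
  have := h6.mul_const ‖G‖
  simpa using this

lemma m01_prob : IsProbabilityMeasure m01 := by
  constructor
  simp [Measure.restrict_apply, Real.volume_Icc]

lemma levy_aux (e : ℕ → Lp ℝ 2 m01)
    (he_wud : ∀ h : ℝ → ℝ, MeasureTheory.MemLp h ⊤ m01 →
      Tendsto (fun n : ℕ => ∫ t in Set.Icc (0:ℝ) 1,
          h t * ((1 / (n : ℝ)) * ∑ k ∈ Finset.range n, (e k t) ^ 2 - 1))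
        atTop (nhds 0))
    (ℓ : ℝ → ℂ) (hℓ : MemLp ℓ ⊤ m01) :
    Tendsto (fun n : ℕ => (1 / (n:ℝ)) • ∑ k ∈ Finset.range n,
        ∫ t, (e k t * e k t) • ℓ t ∂m01) atTop (nhds (∫ t, ℓ t ∂m01)) := by
  haveI : IsProbabilityMeasure m01 := m01_prob
  have intk : ∀ k : ℕ, Integrable (fun t => (e k t * e k t) • ℓ t) m01 := by
    intro k
    have hsq : MemLp (fun t => e k t * e k t) 1 m01 := by
      rw [memLp_one_iff_integrable]
      exact integrable_mul_e (e k) (e k)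
    have := hℓ.smul (r := 1) hsq
    rwa [memLp_one_iff_integrable] at this
  have hℓint : Integrable ℓ m01 := hℓ.integrable le_top
  set c : ℕ → ℝ → ℝ := fun n t => (1 / (n:ℝ)) * ∑ k ∈ Finset.range n, (e k t) ^ 2 with hc
  have hint_sum : ∀ n : ℕ,
      Integrable (fun t => ∑ k ∈ Finset.range n, (e k t * e k t) • ℓ t) m01 :=
    fun n => MeasureTheory.integrable_finset_sum _ (fun k _ => intk k)
  have e2 : ∀ n : ℕ, (fun t => (1 / (n:ℝ)) • ∑ k ∈ Finset.range n, (e k t * e k t) • ℓ t)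
      = fun t => (c n t) • ℓ t := by
    intro n
    funext t
    rw [hc]
    simp only []
    rw [← Finset.sum_smul, smul_smul]
    congr 2
    refine Finset.sum_congr rfl fun k _ => ?_
    rw [pow_two]
  have int1 : ∀ n : ℕ, Integrable (fun t => (c n t) • ℓ t) m01 := by
    intro n
    rw [← e2]
    exact (hint_sum n).smul (1 / (n:ℝ))
  have int2 : ∀ n : ℕ, Integrable (fun t => ((c n t - 1 : ℝ)) • ℓ t) m01 := by
    intro n
    have : (fun t => ((c n t - 1 : ℝ)) • ℓ t) = fun t => (c n t) • ℓ t - ℓ t := by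
      funext t; rw [sub_smul, one_smul]
    rw [this]
    exact (int1 n).sub hℓint
  have hseq : ∀ n : ℕ, (1 / (n:ℝ)) • ∑ k ∈ Finset.range n, ∫ t, (e k t * e k t) • ℓ t ∂m01
      = (∫ t, ((c n t - 1 : ℝ)) • ℓ t ∂m01) + ∫ t, ℓ t ∂m01 := by
    intro n
    rw [← MeasureTheory.integral_finset_sum _ (fun k _ => intk k), ← MeasureTheory.integral_smul,
      e2 n, ← MeasureTheory.integral_add (int2 n) hℓint]
    refine integral_congr_ae (Filter.Eventually.of_forall fun t => ?_)
    show c n t • ℓ t = (c n t - 1) • ℓ t + ℓ t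
    rw [sub_smul, one_smul, sub_add_cancel]
  -- the real and imaginary convergences
  have hr : Tendsto (fun n : ℕ => ∫ t, (c n t - 1) * RCLike.re (ℓ t) ∂m01) atTop (nhds 0) := by
    refine ((he_wud (fun t => RCLike.re (ℓ t)) hℓ.re).congr fun n => ?_)
    refine integral_congr_ae (Filter.Eventually.of_forall fun t => ?_)
    simp only [hc]
    ring
  have him : Tendsto (fun n : ℕ => ∫ t, (c n t - 1) * RCLike.im (ℓ t) ∂m01) atTop (nhds 0) := by
    refine ((he_wud (fun t => RCLike.im (ℓ t)) hℓ.im).congr fun n => ?_)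
    refine integral_congr_ae (Filter.Eventually.of_forall fun t => ?_)
    simp only [hc]
    ring
  have hzn : ∀ n : ℕ, (∫ t, ((c n t - 1 : ℝ)) • ℓ t ∂m01) =
      ((∫ t, (c n t - 1) * RCLike.re (ℓ t) ∂m01 : ℝ) : ℂ)
      + ((∫ t, (c n t - 1) * RCLike.im (ℓ t) ∂m01 : ℝ) : ℂ) * Complex.I := by
    intro n
    have hre : (∫ t, (c n t - 1) * RCLike.re (ℓ t) ∂m01)
        = RCLike.re (∫ t, ((c n t - 1 : ℝ)) • ℓ t ∂m01) := by
      rw [← integral_re (int2 n)]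
      refine integral_congr_ae (Filter.Eventually.of_forall fun t => ?_)
      show (c n t - 1) * RCLike.re (ℓ t) = RCLike.re ((c n t - 1) • ℓ t)
      rw [RCLike.smul_re]
    have him' : (∫ t, (c n t - 1) * RCLike.im (ℓ t) ∂m01)
        = RCLike.im (∫ t, ((c n t - 1 : ℝ)) • ℓ t ∂m01) := by
      rw [← integral_im (int2 n)]
      refine integral_congr_ae (Filter.Eventually.of_forall fun t => ?_)
      show (c n t - 1) * RCLike.im (ℓ t) = RCLike.im ((c n t - 1) • ℓ t)
      rw [RCLike.smul_im]
    rw [hre, him']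
    simp [RCLike.re_to_complex, RCLike.im_to_complex, Complex.re_add_im]
  have hz : Tendsto (fun n : ℕ => ∫ t, ((c n t - 1 : ℝ)) • ℓ t ∂m01) atTop (nhds 0) := by
    rw [funext hzn]
    have t1 : Tendsto (fun n : ℕ =>
        ((∫ t, (c n t - 1) * RCLike.re (ℓ t) ∂m01 : ℝ) : ℂ)) atTop (nhds 0) := by
      have := (Complex.continuous_ofReal.tendsto 0).comp hr
      simpa [Function.comp_def] using this
    have t2 : Tendsto (fun n : ℕ =>
        ((∫ t, (c n t - 1) * RCLike.im (ℓ t) ∂m01 : ℝ) : ℂ) * Complex.I) atTop (nhds 0) := by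
      have := ((Complex.continuous_ofReal.tendsto 0).comp him).mul_const Complex.I
      simpa using this
    simpa using t1.add t2
  rw [funext hseq]
  have := hz.add_const (∫ t, ℓ t ∂m01)
  simpa using this

noncomputable def entryCLM (N : ℕ) (i j : Fin N) : Matrix (Fin N) (Fin N) ℂ →L[ℂ] ℂ :=
  LinearMap.toContinuousLinearMap
    { toFun := fun M => M i j
      map_add' := fun _ _ => rfl
      map_smul' := fun _ _ => rfl }

lemma entryCLM_apply {N : ℕ} (i j : Fin N) (M : Matrix (Fin N) (Fin N) ℂ) :
    entryCLM N i j M = M i j := rfl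

lemma entry_integral {α : Type*} [MeasurableSpace α] {μ : Measure α} {N : ℕ}
    {F : α → Matrix (Fin N) (Fin N) ℂ} (hF : Integrable F μ) (i j : Fin N) :
    (∫ a, F a ∂μ) i j = ∫ a, F a i j ∂μ := by
  have := (entryCLM N i j).integral_comp_comm hF
  exact this.symm

lemma entry_memℒp {α : Type*} [MeasurableSpace α] {μ : Measure α} {N : ℕ} {p : ENNReal}
    {F : α → Matrix (Fin N) (Fin N) ℂ} (hF : MemLp F p μ) (i j : Fin N) :
    MemLp (fun a => F a i j) p μ :=
  (entryCLM N i j).comp_memLp' hF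

lemma tendsto_matrix_of_entries {N : ℕ} {c : ℕ → Matrix (Fin N) (Fin N) ℂ}
    {L : Matrix (Fin N) (Fin N) ℂ}
    (h : ∀ i j, Tendsto (fun n => c n i j) atTop (nhds (L i j))) :
    Tendsto c atTop (nhds L) := by
  have hrep : ∀ M : Matrix (Fin N) (Fin N) ℂ,
      M = ∑ i : Fin N, ∑ j : Fin N, M i j • Matrix.single i j (1:ℂ) := by
    intro M
    conv_lhs => rw [Matrix.matrix_eq_sum_single M]
    refine Finset.sum_congr rfl fun i _ => Finset.sum_congr rfl fun j _ => ?_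
    rw [Matrix.smul_single, smul_eq_mul, mul_one]
  have : ∀ n, c n = ∑ i : Fin N, ∑ j : Fin N, c n i j • Matrix.single i j (1:ℂ) :=
    fun n => hrep (c n)
  rw [funext this, hrep L]
  refine tendsto_finset_sum _ fun i _ => tendsto_finset_sum _ fun j _ => ?_
  exact (h i j).smul_const _

end

/-- Proposition 2: if the second partial derivatives of `f` along the coordinate
subspaces have a Volterra part `K^V_μ ∈ L²([0,1]²)` and a Lévy part `K^L_μ ∈ L^∞([0,1])`,
and `(e_k)` is a weakly uniformly dense orthonormal basis of `L²([0,1],ℝ)`, then the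
classical Lévy Laplacian of `f` at `x` equals `∑_μ ∫₀¹ K^L_μ(t) dt`. -/
theorem stmt4 (d N : ℕ) (hd : 0 < d) (hN : 0 < N)
    (e : ℕ → Lp ℝ 2 (MeasureTheory.volume.restrict (Set.Icc (0:ℝ) 1)))
    (he : Orthonormal ℝ e)
    (he_total : Dense (↑(Submodule.span ℝ (Set.range e)) :
      Set (Lp ℝ 2 (MeasureTheory.volume.restrict (Set.Icc (0:ℝ) 1)))))
    (he_wud : ∀ h : ℝ → ℝ, MeasureTheory.MemLp h ⊤
        (MeasureTheory.volume.restrict (Set.Icc (0:ℝ) 1)) →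
      Tendsto (fun n : ℕ => ∫ t in Set.Icc (0:ℝ) 1,
          h t * ((1 / (n : ℝ)) * ∑ k ∈ Finset.range n, (e k t) ^ 2 - 1))
        atTop (nhds 0))
    (f : Lp (EuclideanSpace ℝ (Fin d)) 2 (MeasureTheory.volume.restrict (Set.Icc (0:ℝ) 1)) →
      Matrix (Fin N) (Fin N) ℂ)
    (x : Lp (EuclideanSpace ℝ (Fin d)) 2 (MeasureTheory.volume.restrict (Set.Icc (0:ℝ) 1)))
    (hf : ∀ᶠ y in nhds x, DifferentiableAt ℝ f y)
    (hf' : DifferentiableAt ℝ (fderiv ℝ f) x)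
    (ι : Fin d → Lp ℝ 2 (MeasureTheory.volume.restrict (Set.Icc (0:ℝ) 1)) →
      Lp (EuclideanSpace ℝ (Fin d)) 2 (MeasureTheory.volume.restrict (Set.Icc (0:ℝ) 1)))
    (hι : ∀ μ u, ι μ u =
      (ContinuousLinearMap.toSpanSingleton ℝ (EuclideanSpace.single μ (1:ℝ))).compLp u)
    (KV : Fin d → ℝ × ℝ → Matrix (Fin N) (Fin N) ℂ)
    (hKV : ∀ μ, MeasureTheory.MemLp (KV μ) 2
      ((MeasureTheory.volume.restrict (Set.Icc (0:ℝ) 1)).prod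
        (MeasureTheory.volume.restrict (Set.Icc (0:ℝ) 1))))
    (KL : Fin d → ℝ → Matrix (Fin N) (Fin N) ℂ)
    (hKL : ∀ μ, MeasureTheory.MemLp (KL μ) ⊤
      (MeasureTheory.volume.restrict (Set.Icc (0:ℝ) 1)))
    (hrep : ∀ (μ : Fin d) (u v : Lp ℝ 2 (MeasureTheory.volume.restrict (Set.Icc (0:ℝ) 1))),
      fderiv ℝ (fderiv ℝ f) x (ι μ u) (ι μ v) =
        (∫ s in Set.Icc (0:ℝ) 1, ∫ t in Set.Icc (0:ℝ) 1, (u t * v s) • KV μ (s, t)) +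
          ∫ t in Set.Icc (0:ℝ) 1, (u t * v t) • KL μ t) :
    Tendsto (fun n : ℕ => (1 / (n : ℝ)) •
        ∑ k ∈ Finset.range n, ∑ μ : Fin d,
          fderiv ℝ (fderiv ℝ f) x (ι μ (e k)) (ι μ (e k)))
      atTop (nhds (∑ μ : Fin d, ∫ t in Set.Icc (0:ℝ) 1, KL μ t)) := by
  letI := @matrixCENorm N
  haveI : IsProbabilityMeasure m01 := m01_prob
  have memprod : ∀ k : ℕ, MemLp (fun z : ℝ × ℝ => e k z.2 * e k z.1) 2 (m01.prod m01) :=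
    fun k => memℒp_prod_fun (e k) (e k)
  have hIV : ∀ (μ : Fin d) (k : ℕ),
      Integrable (fun z : ℝ × ℝ => (e k z.2 * e k z.1) • KV μ z) (m01.prod m01) := by
    intro μ k
    rw [← memLp_one_iff_integrable]
    refine (hKV μ).smul (memprod k) (hpqr := ⟨?_⟩)
    rw [ENNReal.inv_two_add_inv_two]
    simp
  have hIL : ∀ (μ : Fin d) (k : ℕ),
      Integrable (fun t : ℝ => (e k t * e k t) • KL μ t) m01 := by
    intro μ k
    have hsq : MemLp (fun t => e k t * e k t) 1 m01 := by
      rw [memLp_one_iff_integrable]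
      exact integrable_mul_e (e k) (e k)
    have := (hKL μ).smul (r := 1) hsq
    rwa [memLp_one_iff_integrable] at this
  have hsplit : ∀ (μ : Fin d) (k : ℕ),
      fderiv ℝ (fderiv ℝ f) x (ι μ (e k)) (ι μ (e k)) =
        (∫ z, (e k z.2 * e k z.1) • KV μ z ∂(m01.prod m01)) +
          ∫ t, (e k t * e k t) • KL μ t ∂m01 := by
    intro μ k
    rw [hrep μ (e k) (e k)]
    congr 1
    exact (MeasureTheory.integral_prod _ (hIV μ k)).symm
  have hgoalseq : ∀ n : ℕ, ((1 / (n : ℝ)) •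
        ∑ k ∈ Finset.range n, ∑ μ : Fin d,
          fderiv ℝ (fderiv ℝ f) x (ι μ (e k)) (ι μ (e k)))
      = ∑ μ : Fin d,
          ((1 / (n:ℝ)) • ∑ k ∈ Finset.range n,
              (∫ z, (e k z.2 * e k z.1) • KV μ z ∂(m01.prod m01))
            + (1 / (n:ℝ)) • ∑ k ∈ Finset.range n,
              ∫ t, (e k t * e k t) • KL μ t ∂m01) := by
    intro n
    simp only [hsplit]
    rw [Finset.sum_comm, Finset.smul_sum]
    refine Finset.sum_congr rfl fun μ _ => ?_
    rw [← smul_add, ← Finset.sum_add_distrib]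
  rw [funext hgoalseq]
  refine tendsto_finset_sum _ fun μ _ => ?_
  have hKLint : Integrable (KL μ) m01 := (hKL μ).integrable le_top
  have limV : Tendsto (fun n : ℕ => (1 / (n:ℝ)) • ∑ k ∈ Finset.range n,
      (∫ z, (e k z.2 * e k z.1) • KV μ z ∂(m01.prod m01))) atTop
      (nhds (0 : Matrix (Fin N) (Fin N) ℂ)) := by
    apply tendsto_matrix_of_entries
    intro i j
    have hg : MemLp (fun z => KV μ z i j) 2 (m01.prod m01) := entry_memℒp (hKV μ) i j
    have hv := volterra_aux e he (fun z => KV μ z i j) hg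
    have heq : ∀ n : ℕ, (1 / (n:ℝ)) • ∑ k ∈ Finset.range n,
        ∫ z, (e k z.2 * e k z.1) • KV μ z i j ∂(m01.prod m01)
        = ((1 / (n:ℝ)) • ∑ k ∈ Finset.range n,
          (∫ z, (e k z.2 * e k z.1) • KV μ z ∂(m01.prod m01))) i j := by
      intro n
      rw [Matrix.smul_apply, Matrix.sum_apply]
      congr 1
      refine Finset.sum_congr rfl fun k _ => ?_
      rw [entry_integral (hIV μ k) i j]
      refine integral_congr_ae (Filter.Eventually.of_forall fun z => ?_)
      rfl
    have := hv.congr heq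
    simpa using this
  have limL : Tendsto (fun n : ℕ => (1 / (n:ℝ)) • ∑ k ∈ Finset.range n,
      ∫ t, (e k t * e k t) • KL μ t ∂m01) atTop
      (nhds (∫ t, KL μ t ∂m01)) := by
    apply tendsto_matrix_of_entries
    intro i j
    have hℓ : MemLp (fun t => KL μ t i j) ⊤ m01 := entry_memℒp (hKL μ) i j
    have hv := levy_aux e he_wud (fun t => KL μ t i j) hℓ
    have heq : ∀ n : ℕ, (1 / (n:ℝ)) • ∑ k ∈ Finset.range n,
        ∫ t, (e k t * e k t) • KL μ t i j ∂m01
        = ((1 / (n:ℝ)) • ∑ k ∈ Finset.range n,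
          (∫ t, (e k t * e k t) • KL μ t ∂m01)) i j := by
      intro n
      rw [Matrix.smul_apply, Matrix.sum_apply]
      congr 1
      refine Finset.sum_congr rfl fun k _ => ?_
      rw [entry_integral (hIL μ k) i j]
      refine integral_congr_ae (Filter.Eventually.of_forall fun z => ?_)
      rfl
    rw [entry_integral hKLint i j]
    exact hv.congr heq
  have := limV.add limL
  simpa using this
end

section
/- The orthonormal basis h_n(t) = √2 · sin(πnt), n ≥ 1, of L²([0,1],ℝ) is weakly uniformly dense: for every h ∈ L^∞([0,1],ℝ), lim_{n→∞} ∫₀¹ h(t) · ((1/n) Σ_{k=1}^n 2 sin²(πkt) − 1) dt = 0. -/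
open Filter MeasureTheory Real

lemma sum_cos_bound (θ : ℝ) (hz : Complex.exp (θ * Complex.I) ≠ 1) (n : ℕ) :
    |∑ k ∈ Finset.Icc 1 n, Real.cos ((k : ℝ) * θ)| ≤
      2 / ‖Complex.exp (θ * Complex.I) - 1‖ := by
  set z : ℂ := Complex.exp (θ * Complex.I) with hzdef
  have hzk : ∀ k : ℕ, z ^ k = Complex.exp (((k : ℝ) * θ : ℝ) * Complex.I) := by
    intro k
    rw [← Complex.exp_nat_mul]
    push_cast
    ring_nf
  have hre : ∑ k ∈ Finset.Icc 1 n, Real.cos ((k : ℝ) * θ) =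
      (∑ k ∈ Finset.Icc 1 n, z ^ k).re := by
    rw [Complex.re_sum]
    refine Finset.sum_congr rfl fun k _ => ?_
    rw [hzk k, Complex.exp_ofReal_mul_I_re]
  have hsum : ∑ k ∈ Finset.Icc 1 n, z ^ k = (z ^ (n + 1) - z) / (z - 1) := by
    rw [← Finset.Ico_add_one_right_eq_Icc, geom_sum_Ico hz (by omega)]
    simp
  have hnormz : ∀ k : ℕ, ‖z ^ k‖ = 1 := by
    intro k
    rw [hzk k]
    exact Complex.norm_exp_ofReal_mul_I _
  rw [hre]
  calc |(∑ k ∈ Finset.Icc 1 n, z ^ k).re| ≤ ‖∑ k ∈ Finset.Icc 1 n, z ^ k‖ :=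
        Complex.abs_re_le_norm _
    _ = ‖z ^ (n + 1) - z‖ / ‖z - 1‖ := by rw [hsum, norm_div]
    _ ≤ 2 / ‖z - 1‖ := by
        gcongr
        calc ‖z ^ (n + 1) - z‖ ≤ ‖z ^ (n + 1)‖ + ‖z‖ := norm_sub_le _ _
          _ = 2 := by rw [hnormz (n + 1), show ‖z‖ = 1 from pow_one z ▸ hnormz 1]; norm_num

/-- The sine basis `h_n(t) = √2 sin(πnt)` of `L²([0,1],ℝ)` is weakly uniformly dense:
for every `h ∈ L^∞([0,1],ℝ)`,
`lim_{n→∞} ∫₀¹ h(t) ((1/n) ∑_{k=1}^n 2 sin²(πkt) − 1) dt = 0`. -/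
theorem stmt9 (h : ℝ → ℝ)
    (hh : MeasureTheory.MemLp h ⊤ (MeasureTheory.volume.restrict (Set.Icc (0:ℝ) 1))) :
    Tendsto (fun n : ℕ => ∫ t in Set.Icc (0:ℝ) 1,
        h t * ((1 / (n : ℝ)) * ∑ k ∈ Finset.Icc 1 n,
          2 * Real.sin (Real.pi * (k : ℝ) * t) ^ 2 - 1))
      atTop (nhds 0) := by
  set μ := MeasureTheory.volume.restrict (Set.Icc (0:ℝ) 1) with hμ
  set F : ℕ → ℝ → ℝ := fun n t =>
    h t * ((1 / (n : ℝ)) * ∑ k ∈ Finset.Icc 1 n,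
      2 * Real.sin (Real.pi * (k : ℝ) * t) ^ 2 - 1) with hF
  have hint : Integrable (fun t => |h t|) μ :=
    (hh.integrable le_top).abs
  have hmeas : ∀ n, AEStronglyMeasurable (F n) μ := by
    intro n
    exact hh.aestronglyMeasurable.mul (Continuous.aestronglyMeasurable (by fun_prop))
  have hbound : ∀ n, ∀ᵐ t ∂μ, ‖F n t‖ ≤ |h t| := by
    intro n
    filter_upwards with t
    have h1 : (0:ℝ) ≤ (1 / (n : ℝ)) * ∑ k ∈ Finset.Icc 1 n,
        2 * Real.sin (Real.pi * (k : ℝ) * t) ^ 2 := by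
      apply mul_nonneg (by positivity)
      apply Finset.sum_nonneg
      intro k _
      positivity
    have h2 : (1 / (n : ℝ)) * ∑ k ∈ Finset.Icc 1 n,
        2 * Real.sin (Real.pi * (k : ℝ) * t) ^ 2 ≤ 2 := by
      have hs : ∑ k ∈ Finset.Icc 1 n, 2 * Real.sin (Real.pi * (k : ℝ) * t) ^ 2
          ≤ ∑ k ∈ Finset.Icc 1 n, (2:ℝ) := by
        apply Finset.sum_le_sum
        intro k _
        nlinarith [Real.sin_sq_le_one (Real.pi * (k : ℝ) * t)]
      have hcard : ∑ k ∈ Finset.Icc 1 n, (2:ℝ) = 2 * n := by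
        rw [Finset.sum_const, Nat.card_Icc]
        push_cast
        ring_nf
      rcases Nat.eq_zero_or_pos n with hn | hn
      · simp [hn]
      · calc (1 / (n : ℝ)) * ∑ k ∈ Finset.Icc 1 n,
            2 * Real.sin (Real.pi * (k : ℝ) * t) ^ 2
            ≤ (1 / (n : ℝ)) * (2 * n) := by
              apply mul_le_mul_of_nonneg_left (hs.trans_eq hcard) (by positivity)
          _ = 2 := by
              field_simp
    rw [hF]
    simp only [norm_mul, Real.norm_eq_abs]
    have : |(1 / (n : ℝ)) * ∑ k ∈ Finset.Icc 1 n,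
        2 * Real.sin (Real.pi * (k : ℝ) * t) ^ 2 - 1| ≤ 1 := by
      rw [abs_le]; constructor <;> linarith
    calc |h t| * |_| ≤ |h t| * 1 := mul_le_mul_of_nonneg_left this (abs_nonneg _)
      _ = |h t| := mul_one _
  have hlim : ∀ᵐ t ∂μ, Tendsto (fun n => F n t) atTop (nhds 0) := by
    have h0 : ∀ᵐ t ∂μ, t ∈ Set.Ioo (0:ℝ) 1 := by
      have hIcc : ∀ᵐ t ∂μ, t ∈ Set.Icc (0:ℝ) 1 :=
        ae_restrict_mem measurableSet_Icc
    -- combine with the null set {0,1}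
      have hne : ∀ᵐ t ∂μ, t ≠ 0 ∧ t ≠ 1 := by
        have : μ ({0, 1} : Set ℝ) = 0 := by
          rw [hμ, Measure.restrict_apply (by measurability)]
          exact measure_mono_null Set.inter_subset_left
            ((Set.toFinite ({0, 1} : Set ℝ)).measure_zero _)
        filter_upwards [measure_eq_zero_iff_ae_notMem.mp this] with t ht
        simp only [Set.mem_insert_iff, Set.mem_singleton_iff] at ht
        push_neg at ht
        exact ht
      filter_upwards [hIcc, hne] with t ht ⟨ht0, ht1⟩
      exact ⟨lt_of_le_of_ne ht.1 (Ne.symm ht0), lt_of_le_of_ne ht.2 ht1⟩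
    filter_upwards [h0] with t ht
    -- z = exp(2πt i) ≠ 1
    have hz : Complex.exp ((2 * Real.pi * t : ℝ) * Complex.I) ≠ 1 := by
      intro hc
      have hre : Real.cos (2 * Real.pi * t) = 1 := by
        have := congrArg Complex.re hc
        rwa [Complex.exp_ofReal_mul_I_re] at this
      have h1 : 2 * Real.pi * t = 0 := by
        rw [Real.cos_eq_one_iff_of_lt_of_lt] at hre
        · exact hre
        · nlinarith [Real.pi_pos, ht.1, ht.2]
        · nlinarith [Real.pi_pos, ht.1, ht.2]
      nlinarith [Real.pi_pos, ht.1]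
    set C : ℝ := 2 / ‖Complex.exp ((2 * Real.pi * t : ℝ) * Complex.I) - 1‖ with hC
    have hCb : ∀ n : ℕ, |∑ k ∈ Finset.Icc 1 n, Real.cos ((k : ℝ) * (2 * Real.pi * t))| ≤ C :=
      sum_cos_bound (2 * Real.pi * t) hz
    have key : ∀ n : ℕ, 1 ≤ n → F n t = -(h t * ((1 / (n : ℝ)) *
        ∑ k ∈ Finset.Icc 1 n, Real.cos ((k : ℝ) * (2 * Real.pi * t)))) := by
      intro n hn
      rw [hF]
      have hterm : ∀ k : ℕ, 2 * Real.sin (Real.pi * (k : ℝ) * t) ^ 2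
          = 1 - Real.cos ((k : ℝ) * (2 * Real.pi * t)) := by
        intro k
        have : ((k : ℝ) * (2 * Real.pi * t)) = 2 * (Real.pi * (k : ℝ) * t) := by ring
        rw [this, Real.cos_two_mul]
        nlinarith [Real.sin_sq_add_cos_sq (Real.pi * (k : ℝ) * t)]
      simp only [hterm, Finset.sum_sub_distrib, Finset.sum_const, Nat.card_Icc,
        nsmul_eq_mul]
      have hn' : (n : ℝ) ≠ 0 := by positivity
      field_simp
      rw [Nat.add_sub_cancel]
      ring_nf
      congr 2
      exact Finset.sum_congr rfl fun x _ => by ring_nf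
    have hlim2 : Tendsto (fun n : ℕ => -(h t * ((1 / (n : ℝ)) *
        ∑ k ∈ Finset.Icc 1 n, Real.cos ((k : ℝ) * (2 * Real.pi * t))))) atTop (nhds 0) := by
      apply squeeze_zero_norm (a := fun n : ℕ => |h t| * C / n)
      · intro n
        rcases Nat.eq_zero_or_pos n with hn | hn
        · simp [hn]
        · rw [norm_neg, norm_mul, norm_mul, Real.norm_eq_abs, Real.norm_eq_abs,
            Real.norm_eq_abs]
          rw [abs_of_nonneg (by positivity : (0:ℝ) ≤ 1 / (n:ℝ))]
          have : |h t| * (1 / (n : ℝ) *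
              |∑ k ∈ Finset.Icc 1 n, Real.cos ((k : ℝ) * (2 * Real.pi * t))|) ≤
              |h t| * (1 / (n : ℝ) * C) := by
            gcongr
            exact hCb n
          calc |h t| * (1 / (n : ℝ) *
              |∑ k ∈ Finset.Icc 1 n, Real.cos ((k : ℝ) * (2 * Real.pi * t))|)
              ≤ |h t| * (1 / (n : ℝ) * C) := this
            _ = |h t| * C / n := by ring
      · have := tendsto_const_div_atTop_nhds_zero_nat (|h t| * C)
        exact this
    apply hlim2.congr'
    filter_upwards [eventually_ge_atTop 1] with n hn
    exact (key n hn).symm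
  have := MeasureTheory.tendsto_integral_of_dominated_convergence (μ := μ)
    (F := F) (f := fun _ => 0) (fun t => |h t|) hmeas hint hbound hlim
  simpa only [hF, one_div, integral_zero] using this
end

section
/- The orthonormal basis l_0(t) = 1, l_n(t) = √2 · cos(πnt) (n ≥ 1) of L²([0,1],ℝ) is weakly uniformly dense: for every h ∈ L^∞([0,1],ℝ), lim_{n→∞} ∫₀¹ h(t) · ((1/n)(1 + Σ_{k=1}^{n−1} 2 cos²(πkt)) − 1) dt = 0. -/
open Filter MeasureTheory Real

/-- Riemann–Lebesgue lemma for cosine coefficients on `[0,1]`. -/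
theorem aux_RL_cos (h : ℝ → ℝ)
    (hint : Integrable h (volume.restrict (Set.Icc (0:ℝ) 1))) :
    Tendsto (fun k : ℕ => ∫ t in Set.Icc (0:ℝ) 1, h t * Real.cos (2 * π * k * t))
      atTop (nhds 0) := by
  set f : ℝ → ℂ := Set.indicator (Set.Icc (0:ℝ) 1) (fun t => (h t : ℂ)) with hf
  have key := Real.tendsto_integral_exp_smul_cocompact f
  have hnat : Tendsto (fun k : ℕ => (k : ℝ)) atTop (cocompact ℝ) := by
    refine Tendsto.mono_right tendsto_natCast_atTop_atTop ?_
    rw [cocompact_eq_atBot_atTop]; exact le_sup_right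
  have h2 : Tendsto (fun k : ℕ => ∫ v : ℝ, Real.fourierChar (-(v * k)) • f v) atTop (nhds 0) :=
    key.comp hnat
  have h3 := (Complex.continuous_re.tendsto 0).comp h2
  simp only [Complex.zero_re] at h3
  refine h3.congr fun k => ?_
  have hind : ∀ v : ℝ, Real.fourierChar (-(v * k)) • f v
      = Set.indicator (Set.Icc (0:ℝ) 1) (fun v => Real.fourierChar (-(v * k)) • (h v : ℂ)) v := by
    intro v
    by_cases hv : v ∈ Set.Icc (0:ℝ) 1 <;>
      simp [hf, Set.indicator_of_mem, Set.indicator_of_notMem, hv]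
  have hI : Integrable (fun v => Real.fourierChar (-(v * (k:ℝ))) • (h v : ℂ))
      (volume.restrict (Set.Icc (0:ℝ) 1)) := by
    have : Integrable (fun v => ((h v : ℂ))) (volume.restrict (Set.Icc (0:ℝ) 1)) :=
      hint.ofReal
    refine Integrable.congr (this.bdd_mul
      (f := fun v => ((Real.fourierChar (-(v * (k:ℝ)))) : ℂ)) (c := 1) ?_ ?_) ?_
    · exact Continuous.aestronglyMeasurable <| continuous_subtype_val.comp <|
        Real.continuous_fourierChar.comp (by fun_prop)
    · exact Eventually.of_forall fun v => (Circle.norm_coe _).le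
    · exact Eventually.of_forall fun v => by simp [Circle.smul_def, mul_comm]
  calc (∫ v : ℝ, Real.fourierChar (-(v * k)) • f v).re
      = (∫ v in Set.Icc (0:ℝ) 1, Real.fourierChar (-(v * k)) • (h v : ℂ)).re := by
        rw [show (fun v : ℝ => Real.fourierChar (-(v * (k:ℝ))) • f v) = _ from funext hind,
          integral_indicator measurableSet_Icc]
    _ = ∫ v in Set.Icc (0:ℝ) 1, (Real.fourierChar (-(v * k)) • (h v : ℂ)).re := by
        simpa using (Complex.reCLM.integral_comp_comm hI).symm
    _ = ∫ t in Set.Icc (0:ℝ) 1, h t * Real.cos (2 * π * k * t) := by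
        refine integral_congr_ae (Eventually.of_forall fun v => ?_)
        simp [Circle.smul_def, Real.fourierChar_apply, Complex.exp_re, Complex.exp_im,
          Real.cos_neg, Real.sin_neg]
        ring_nf

/-- The cosine basis `l_0(t) = 1`, `l_n(t) = √2 cos(πnt)` of `L²([0,1],ℝ)` is weakly
uniformly dense: for every `h ∈ L^∞([0,1],ℝ)`,
`lim_{n→∞} ∫₀¹ h(t) ((1/n)(1 + ∑_{k=1}^{n−1} 2 cos²(πkt)) − 1) dt = 0`. -/
theorem stmt10 (h : ℝ → ℝ)
    (hh : MeasureTheory.MemLp h ⊤ (MeasureTheory.volume.restrict (Set.Icc (0:ℝ) 1))) :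
    Tendsto (fun n : ℕ => ∫ t in Set.Icc (0:ℝ) 1,
        h t * ((1 / (n : ℝ)) * (1 + ∑ k ∈ Finset.Icc 1 (n - 1),
          2 * Real.cos (Real.pi * (k : ℝ) * t) ^ 2) - 1))
      atTop (nhds 0) := by
  have hint : Integrable h (volume.restrict (Set.Icc (0:ℝ) 1)) :=
    hh.integrable le_top
  set a : ℕ → ℝ := fun k => if k = 0 then 0 else
    ∫ t in Set.Icc (0:ℝ) 1, h t * Real.cos (2 * π * k * t) with ha_def
  have ha : Tendsto a atTop (nhds 0) := by
    refine (aux_RL_cos h hint).congr' ?_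
    filter_upwards [eventually_ge_atTop 1] with k hk
    simp [ha_def, Nat.one_le_iff_ne_zero.mp hk]
  have hces := ha.cesaro
  refine hces.congr' ?_
  filter_upwards [eventually_ge_atTop 1] with n hn
  have hIk : ∀ k : ℕ, Integrable (fun t => h t * Real.cos (2 * π * k * t))
      (volume.restrict (Set.Icc (0:ℝ) 1)) := by
    intro k
    refine Integrable.congr (hint.bdd_mul (f := fun t => Real.cos (2 * π * k * t)) (c := 1)
      (Continuous.aestronglyMeasurable (by fun_prop)) ?_) ?_
    · exact Eventually.of_forall fun t => by simpa using Real.abs_cos_le_one _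
    · exact Eventually.of_forall fun t => mul_comm _ _
  -- pointwise rewrite of the integrand
  have hpt : ∀ t : ℝ, h t * ((1 / (n : ℝ)) * (1 + ∑ k ∈ Finset.Icc 1 (n - 1),
        2 * Real.cos (Real.pi * (k : ℝ) * t) ^ 2) - 1)
      = (n : ℝ)⁻¹ * ∑ k ∈ Finset.Icc 1 (n - 1), h t * Real.cos (2 * π * k * t) := by
    intro t
    have hcos : ∀ k : ℕ, 2 * Real.cos (Real.pi * (k : ℝ) * t) ^ 2
        = 1 + Real.cos (2 * π * k * t) := by
      intro k
      have := Real.cos_sq (π * k * t)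
      rw [this]; rw [show 2 * (π * (k:ℝ) * t) = 2 * π * k * t by ring]; ring
    simp only [hcos, Finset.sum_add_distrib, Finset.sum_const, Nat.card_Icc,
      nsmul_eq_mul, mul_one]
    have hcard : ((n - 1 + 1 - 1 : ℕ) : ℝ) = (n : ℝ) - 1 := by
      have : n - 1 + 1 - 1 = n - 1 := by omega
      rw [this, Nat.cast_sub hn, Nat.cast_one]
    have hn0 : (n : ℝ) ≠ 0 := by positivity
    rw [hcard, ← Finset.mul_sum]
    field_simp
    ring_nf
    exact congrArg _ (Finset.sum_congr rfl fun x _ => by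
      rw [show π * (x:ℝ) * t * 2 = π * t * x * 2 by ring])
  rw [show (∫ t in Set.Icc (0:ℝ) 1,
      h t * ((1 / (n : ℝ)) * (1 + ∑ k ∈ Finset.Icc 1 (n - 1),
        2 * Real.cos (Real.pi * (k : ℝ) * t) ^ 2) - 1))
    = ∫ t in Set.Icc (0:ℝ) 1, (n : ℝ)⁻¹ * ∑ k ∈ Finset.Icc 1 (n - 1),
        h t * Real.cos (2 * π * k * t) from integral_congr_ae (.of_forall hpt)]
  rw [integral_const_mul, integral_finset_sum _ (fun k _ => hIk k)]
  congr 1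
  rw [show Finset.Icc 1 (n-1) = Finset.Ico 1 n by
    rw [← Finset.Ico_add_one_right_eq_Icc]; congr 1; omega]
  rw [Finset.range_eq_Ico]
  rw [← Finset.sum_subset (Finset.Ico_subset_Ico (Nat.zero_le 1) le_rfl)
    (fun i hi hni => ?_)]
  · refine Finset.sum_congr rfl fun k hk => ?_
    have : k ≠ 0 := by simp at hk; omega
    simp [ha_def, this]
  · have : i = 0 := by simp at hi hni; omega
    simp [ha_def, this]
end
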